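/- For every n×n matrix M over F, the 2n×2n block matrix [[0, I_n],[M, 0]] is *congruent to its transpose via a coninvolutory matrix: there exists a coninvolutory matrix T over F such that T* [[0, I_n],[M, 0]] T = [[0, M^T],[I_n, 0]]. -/

import Mathlib

open Matrix Polynomial DirectSum

/-- A symmetric "balanced" nondegenerate `F`-valued form on a module over `F[X]`. -/
structure GForm (F : Type*) [Field F] (V : Type*) [AddCommGroup V]
    [Module (Polynomial F) V] where
  B : V → V → F
  add_left : ∀ u u' v, B (u + u') v = B u v + B u' v
  symm : ∀ u v, B u v = B v u
  passoc : ∀ (p : Polynomial F) (u v : V), B (p • u) v = B u (p • v)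
  smulC : ∀ (a : F) (u v : V), B ((C a : Polynomial F) • u) v = a * B u v
  nondeg : ∀ u : V, u ≠ 0 → ∃ v, B u v ≠ 0

namespace GForm

variable {F : Type*} [Field F] {V : Type*} [AddCommGroup V] [Module (Polynomial F) V]

lemma add_right (G : GForm F V) (u v v' : V) :
    G.B u (v + v') = G.B u v + G.B u v' := by
  rw [G.symm, G.add_left, G.symm v, G.symm v']

lemma zero_left (G : GForm F V) (v : V) : G.B 0 v = 0 := by
  have h := G.add_left 0 0 v
  rw [add_zero] at h
  exact (left_eq_add.mp h)

lemma zero_right (G : GForm F V) (u : V) : G.B u 0 = 0 := by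
  rw [G.symm]; exact G.zero_left u

/-- Transport a form along an `F[X]`-linear equivalence. -/
noncomputable def congr {W : Type*} [AddCommGroup W] [Module (Polynomial F) W]
    (e : W ≃ₗ[Polynomial F] V) (G : GForm F V) : GForm F W where
  B u v := G.B (e u) (e v)
  add_left u u' v := by
    show G.B (e (u + u')) (e v) = G.B (e u) (e v) + G.B (e u') (e v)
    rw [map_add, G.add_left]
  symm u v := G.symm _ _
  passoc p u v := by
    show G.B (e (p • u)) (e v) = G.B (e u) (e (p • v))
    rw [_root_.map_smul, _root_.map_smul, G.passoc]
  smulC a u v := by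
    show G.B (e ((C a : Polynomial F) • u)) (e v) = a * G.B (e u) (e v)
    rw [_root_.map_smul, G.smulC]
  nondeg u hu := by
    obtain ⟨v, hv⟩ := G.nondeg (e u) (by
      intro h
      exact hu (by simpa using congrArg e.symm h))
    exact ⟨e.symm v, by simpa using hv⟩

/-- Direct sum of forms. -/
def directSum {ι : Type*} [Fintype ι] [DecidableEq ι]
    (Vf : ι → Type*) [∀ i, AddCommGroup (Vf i)] [∀ i, Module (Polynomial F) (Vf i)]
    (G : ∀ i, GForm F (Vf i)) : GForm F (⨁ i, Vf i) where
  B u v := ∑ i, (G i).B (u i) (v i)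
  add_left u u' v := by
    rw [← Finset.sum_add_distrib]
    refine Finset.sum_congr rfl fun i _ => ?_
    rw [DirectSum.add_apply, (G i).add_left]
  symm u v := Finset.sum_congr rfl fun i _ => (G i).symm _ _
  passoc p u v := by
    refine Finset.sum_congr rfl fun i _ => ?_
    have h1 : (p • u) i = p • u i := rfl
    have h2 : (p • v) i = p • v i := rfl
    rw [h1, h2, (G i).passoc]
  smulC a u v := by
    rw [Finset.mul_sum]
    refine Finset.sum_congr rfl fun i _ => ?_
    have h1 : ((C a : Polynomial F) • u) i = (C a : Polynomial F) • u i := rfl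
    rw [h1, (G i).smulC]
  nondeg u hu := by
    have hex : ∃ i, u i ≠ 0 := by
      by_contra h
      push_neg at h
      exact hu (DFinsupp.ext fun i => by simpa using h i)
    obtain ⟨i, hi⟩ := hex
    obtain ⟨w, hw⟩ := (G i).nondeg (u i) hi
    refine ⟨DirectSum.of Vf i w, ?_⟩
    show (∑ j, (G j).B (u j) ((DirectSum.of Vf i w) j)) ≠ 0
    rw [Finset.sum_eq_single i]
    · rwa [DirectSum.of_eq_same]
    · intro j _ hj
      rw [DirectSum.of_eq_of_ne _ _ _ hj]
      exact (G j).zero_right _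
    · intro h; exact absurd (Finset.mem_univ i) h

end GForm
section Cyclic

variable {F : Type*} [Field F]

/-- The coefficient functional used to build the form on `F[X]/(q)`. -/
noncomputable def psiq (q f : Polynomial F) : F := (f %ₘ q).coeff (q.natDegree - 1)

lemma psiq_add (q f g : Polynomial F) : psiq q (f + g) = psiq q f + psiq q g := by
  simp [psiq, Polynomial.add_modByMonic]

lemma psiq_eq_of_sub_mem {q : Polynomial F} (hq : q.Monic) {f g : Polynomial F}
    (h : f - g ∈ Submodule.span (Polynomial F) {q}) : psiq q f = psiq q g := by
  obtain ⟨c, hc⟩ := Submodule.mem_span_singleton.mp h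
  have hf : f = g + c * q := by
    rw [smul_eq_mul] at hc
    rw [hc]; ring
  rw [hf, psiq_add]
  have : psiq q (c * q) = 0 := by
    have h0 : (c * q) %ₘ q = 0 := (Polynomial.modByMonic_eq_zero_iff_dvd hq).mpr ⟨c, mul_comm _ _⟩
    simp [psiq, h0]
  rw [this, add_zero]

/-- The form on the cyclic module `F[X] ⧸ (q)`. -/
noncomputable def Bquot (q : Polynomial F)
    (u v : Polynomial F ⧸ Submodule.span (Polynomial F) {q}) : F :=
  psiq q (Quotient.out u * Quotient.out v)

lemma mk_out' {q : Polynomial F} (u : Polynomial F ⧸ Submodule.span (Polynomial F) {q}) :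
    Submodule.Quotient.mk (Quotient.out u) = u := by
  rw [← Submodule.Quotient.mk''_eq_mk]
  exact Quotient.out_eq' u

lemma Bquot_mk {q : Polynomial F} (hq : q.Monic) (f g : Polynomial F) :
    Bquot q (Submodule.Quotient.mk f) (Submodule.Quotient.mk g) = psiq q (f * g) := by
  set f' := Quotient.out (Submodule.Quotient.mk f
    : Polynomial F ⧸ Submodule.span (Polynomial F) {q}) with hf'
  set g' := Quotient.out (Submodule.Quotient.mk g
    : Polynomial F ⧸ Submodule.span (Polynomial F) {q}) with hg'
  have hfm : f' - f ∈ Submodule.span (Polynomial F) {q} := by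
    rw [← Submodule.Quotient.eq, mk_out']
  have hgm : g' - g ∈ Submodule.span (Polynomial F) {q} := by
    rw [← Submodule.Quotient.eq, mk_out']
  apply psiq_eq_of_sub_mem hq
  have : f' * g' - f * g = g' * (f' - f) + f * (g' - g) := by ring
  rw [this]
  exact Submodule.add_mem _ (Submodule.smul_mem _ g' hfm) (Submodule.smul_mem _ f hgm)

lemma psiq_C_mul (q : Polynomial F) (a : F) (h : Polynomial F) :
    psiq q (Polynomial.C a * h) = a * psiq q h := by
  rw [← Polynomial.smul_eq_C_mul]
  simp [psiq, Polynomial.smul_modByMonic]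

/-- The good form on a cyclic quotient by a monic polynomial. -/
noncomputable def gformQuot (q : Polynomial F) (hq : q.Monic) :
    GForm F (Polynomial F ⧸ Submodule.span (Polynomial F) {q}) where
  B := Bquot q
  add_left u u' v := by
    obtain ⟨f, rfl⟩ := Submodule.Quotient.mk_surjective _ u
    obtain ⟨f', rfl⟩ := Submodule.Quotient.mk_surjective _ u'
    obtain ⟨g, rfl⟩ := Submodule.Quotient.mk_surjective _ v
    rw [← Submodule.Quotient.mk_add, Bquot_mk hq, Bquot_mk hq, Bquot_mk hq, add_mul, psiq_add]
  symm u v := by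
    obtain ⟨f, rfl⟩ := Submodule.Quotient.mk_surjective _ u
    obtain ⟨g, rfl⟩ := Submodule.Quotient.mk_surjective _ v
    rw [Bquot_mk hq, Bquot_mk hq, mul_comm]
  passoc p u v := by
    obtain ⟨f, rfl⟩ := Submodule.Quotient.mk_surjective _ u
    obtain ⟨g, rfl⟩ := Submodule.Quotient.mk_surjective _ v
    rw [← Submodule.Quotient.mk_smul, ← Submodule.Quotient.mk_smul, smul_eq_mul, smul_eq_mul,
      Bquot_mk hq, Bquot_mk hq]
    congr 1; ring
  smulC a u v := by
    obtain ⟨f, rfl⟩ := Submodule.Quotient.mk_surjective _ u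
    obtain ⟨g, rfl⟩ := Submodule.Quotient.mk_surjective _ v
    rw [← Submodule.Quotient.mk_smul, smul_eq_mul, Bquot_mk hq, Bquot_mk hq, mul_assoc,
      psiq_C_mul]
  nondeg u hu := by
    obtain ⟨f, rfl⟩ := Submodule.Quotient.mk_surjective _ u
    have hf : ¬ q ∣ f := by
      intro ⟨c, hc⟩
      apply hu
      rw [Submodule.Quotient.mk_eq_zero]
      exact Submodule.mem_span_singleton.mpr ⟨c, by rw [smul_eq_mul, mul_comm, ← hc]⟩
    set r := f %ₘ q with hr
    have hr0 : r ≠ 0 := fun h => hf ((Polynomial.modByMonic_eq_zero_iff_dvd hq).mp h)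
    have hdeg : r.degree < q.degree := Polynomial.degree_modByMonic_lt f hq
    have hq0 : q ≠ 0 := hq.ne_zero
    have hnat : r.natDegree < q.natDegree := by
      have := Polynomial.natDegree_lt_natDegree hr0 hdeg
      exact this
    set d := q.natDegree with hd
    set k := r.natDegree with hk
    set m := d - 1 - k with hm
    refine ⟨Submodule.Quotient.mk (Polynomial.X ^ m), ?_⟩
    show Bquot q _ _ ≠ 0
    rw [Bquot_mk hq]
    have hXm : (Polynomial.X : Polynomial F) ^ m ≠ 0 := pow_ne_zero _ Polynomial.X_ne_zero
    have hrXm : r * Polynomial.X ^ m ≠ 0 := mul_ne_zero hr0 hXm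
    have hdeg2 : (r * Polynomial.X ^ m).degree < q.degree := by
      rw [Polynomial.degree_eq_natDegree hq0, ← Polynomial.natDegree_lt_iff_degree_lt hrXm]
      rw [Polynomial.natDegree_mul hr0 hXm, Polynomial.natDegree_X_pow]
      omega
    have hkey : (f * Polynomial.X ^ m) %ₘ q = r * Polynomial.X ^ m := by
      conv_lhs => rw [← Polynomial.modByMonic_add_div f q]
      rw [add_mul, mul_assoc, Polynomial.add_modByMonic, Polynomial.self_mul_modByMonic hq,
        add_zero, (Polynomial.modByMonic_eq_self_iff hq).mpr hdeg2]
    rw [psiq, hkey]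
    have hkm : k + m = d - 1 := by omega
    have : (r * Polynomial.X ^ m).coeff (d - 1) = r.coeff k := by
      rw [← hkm, Polynomial.coeff_mul_X_pow]
    rw [this]
    exact Polynomial.leadingCoeff_ne_zero.mpr hr0

end Cyclic
section TZ

variable {F : Type*} [Field F]

/-- **Taussky–Zassenhaus**: every square matrix over a field is similar to its
transpose via a symmetric nonsingular matrix. -/
theorem exists_symm_similar_transpose {n : ℕ} (M : Matrix (Fin n) (Fin n) F) :
    ∃ P : Matrix (Fin n) (Fin n) F, Pᵀ = P ∧ IsUnit P.det ∧ M * P = P * Mᵀ := by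
  classical
  set φ : (Fin n → F) →ₗ[F] (Fin n → F) := Matrix.mulVecLin Mᵀ with hφdef
  have hint : IsIntegral F φ := IsIntegral.of_finite F φ
  have hmp : minpoly F φ ≠ 0 := minpoly.ne_zero hint
  have htor : Module.IsTorsion (Polynomial F) (Module.AEval' φ) := by
    intro x
    refine ⟨⟨minpoly F φ, mem_nonZeroDivisors_of_ne_zero hmp⟩, ?_⟩
    show (minpoly F φ) • x = 0
    have hx : x = Module.AEval'.of φ ((Module.AEval'.of φ).symm x) :=
      (LinearEquiv.apply_symm_apply _ _).symm
    rw [hx, ← Module.AEval.of_aeval_smul, minpoly.aeval]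
    simp
  obtain ⟨ι, hι, p, hp, e, ⟨eqv⟩⟩ := Module.equiv_directSum_of_isTorsion htor
  let q : ι → Polynomial F := fun i => (p i ^ e i) * Polynomial.C ((p i ^ e i).leadingCoeff)⁻¹
  have hg0 : ∀ i, p i ^ e i ≠ 0 := fun i => pow_ne_zero _ (hp i).ne_zero
  have hqmon : ∀ i, (q i).Monic := fun i => Polynomial.monic_mul_leadingCoeff_inv (hg0 i)
  have hspan : ∀ i, (Polynomial F ∙ (p i ^ e i)) = Polynomial F ∙ (q i) := by
    intro i
    apply Submodule.span_singleton_eq_span_singleton.mpr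
    have hc : IsUnit (Polynomial.C ((p i ^ e i).leadingCoeff)⁻¹) :=
      Polynomial.isUnit_C.mpr (isUnit_iff_ne_zero.mpr
        (inv_ne_zero (Polynomial.leadingCoeff_ne_zero.mpr (hg0 i))))
    refine ⟨hc.unit, ?_⟩
    rw [Units.smul_def, IsUnit.unit_spec, smul_eq_mul, mul_comm]
  let Gi : ∀ i, GForm F (Polynomial F ⧸ (Polynomial F ∙ (p i ^ e i))) := fun i =>
    (gformQuot (q i) (hqmon i)).congr (Submodule.quotEquivOfEq _ _ (hspan i))
  let Gv : GForm F (Module.AEval' φ) := (GForm.directSum _ Gi).congr eqv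
  let ι0 := Module.AEval'.of φ
  let bf : (Fin n → F) → (Fin n → F) → F := fun u v => Gv.B (ι0 u) (ι0 v)
  have bf_addl : ∀ u u' v, bf (u + u') v = bf u v + bf u' v := fun u u' v => by
    simp only [bf, map_add]; exact Gv.add_left _ _ _
  have bf_symm : ∀ u v, bf u v = bf v u := fun u v => Gv.symm _ _
  have bf_smul : ∀ (a : F) u v, bf (a • u) v = a * bf u v := fun a u v => by
    simp only [bf, _root_.map_smul]
    have hC : (Polynomial.C a : Polynomial F) • (ι0 u) = a • (ι0 u) := by simp
    rw [← hC]
    exact Gv.smulC a _ _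
  have bf_addr : ∀ u v v', bf u (v + v') = bf u v + bf u v' := fun u v v' => by
    rw [bf_symm, bf_addl, bf_symm v, bf_symm v']
  have bf_smulr : ∀ (a : F) u v, bf u (a • v) = a * bf u v := fun a u v => by
    rw [bf_symm, bf_smul, bf_symm]
  let bL : (Fin n → F) →ₗ[F] (Fin n → F) →ₗ[F] F :=
    LinearMap.mk₂ F bf bf_addl bf_smul bf_addr bf_smulr
  have bL_phi : ∀ u v, bL (φ u) v = bL u (φ v) := fun u v => by
    show bf (φ u) v = bf u (φ v)
    simp only [bf]
    show Gv.B (Module.AEval'.of φ (φ u)) (Module.AEval'.of φ v)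
      = Gv.B (Module.AEval'.of φ u) (Module.AEval'.of φ (φ v))
    rw [← Module.AEval'.X_smul_of, ← Module.AEval'.X_smul_of, Gv.passoc]
  let s : Fin n → (Fin n → F) := fun i => Pi.single i (1 : F)
  let P : Matrix (Fin n) (Fin n) F := Matrix.of fun i j => bL (s i) (s j)
  have hrep : ∀ u : Fin n → F, u = ∑ i, u i • s i := by
    intro u
    funext k
    simp [s, Finset.sum_apply, Pi.single_apply]
  have hexp : ∀ u v, bL u v = ∑ i, ∑ j, u i * v j * P i j := by
    intro u v
    conv_lhs => rw [hrep u, hrep v]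
    simp only [map_sum, LinearMap.sum_apply, _root_.map_smul, LinearMap.smul_apply, smul_eq_mul,
      Finset.mul_sum]
    rw [Finset.sum_comm]
    refine Finset.sum_congr rfl fun i _ => Finset.sum_congr rfl fun j _ => ?_
    exact (by ring : v j * (u i * (bL (s i)) (s j)) = u i * v j * ((bL (s i)) (s j)))
  have hPsym : Pᵀ = P := by
    ext i j
    exact bf_symm (s j) (s i)
  have hsingle : ∀ (i : Fin n) (w : Fin n → F),
      bL w (s i) = ∑ k, w k * P k i := by
    intro i w
    rw [hexp]
    refine Finset.sum_congr rfl fun k _ => ?_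
    rw [Finset.sum_eq_single i]
    · simp [s, Pi.single_apply]
    · intro l _ hl
      simp [s, Pi.single_apply, hl]
    · intro h; exact absurd (Finset.mem_univ i) h
  have hsingle' : ∀ (i : Fin n) (w : Fin n → F),
      bL (s i) w = ∑ k, w k * P i k := by
    intro i w
    have hsym : bL (s i) w = bL w (s i) := bf_symm (s i) w
    rw [hsym, hsingle i w]
    refine Finset.sum_congr rfl fun k _ => ?_
    rw [show P k i = P i k from bf_symm (s k) (s i)]
  have hphi_single : ∀ i : Fin n, φ (s i) = fun k => M i k := by
    intro i
    funext k
    simp [hφdef, s, Matrix.mulVecLin_apply, Matrix.mulVec_single]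
  have hMP : M * P = P * Mᵀ := by
    ext i j
    have h1 : (M * P) i j = bL (φ (s i)) (s j) := by
      rw [hsingle j (φ (s i)), Matrix.mul_apply]
      refine Finset.sum_congr rfl fun k _ => by rw [hphi_single]
    have h2 : (P * Mᵀ) i j = bL (s i) (φ (s j)) := by
      rw [hsingle' i (φ (s j)), Matrix.mul_apply]
      refine Finset.sum_congr rfl fun k _ => ?_
      rw [hphi_single]
      simp [Matrix.transpose_apply, mul_comm]
    rw [h1, h2, bL_phi]
  have hdet : IsUnit P.det := by
    rw [isUnit_iff_ne_zero]
    intro h0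
    obtain ⟨u, hu0, hu⟩ := Matrix.exists_vecMul_eq_zero_iff.mpr h0
    have hne : ι0 u ≠ 0 := by
      intro h
      exact hu0 (by simpa using congrArg ι0.symm h)
    obtain ⟨w, hw⟩ := Gv.nondeg _ hne
    apply hw
    have hbw : Gv.B (ι0 u) w = bL u (ι0.symm w) := by
      show _ = Gv.B (ι0 u) (ι0 (ι0.symm w))
      rw [LinearEquiv.apply_symm_apply]
    rw [hbw, hexp, Finset.sum_comm]
    apply Finset.sum_eq_zero
    intro j _
    have hz : ∑ i, u i * P i j = 0 := by
      have := congrFun hu j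
      simpa [Matrix.vecMul, dotProduct] using this
    have : ∑ i, u i * (ι0.symm w) j * P i j = (∑ i, u i * P i j) * (ι0.symm w) j := by
      rw [Finset.sum_mul]
      exact Finset.sum_congr rfl fun i _ => by ring
    rw [this, hz, zero_mul]
  exact ⟨P, hPsym, hdet, hMP⟩

end TZ
/-- For every `n × n` matrix `M` over a field `F` of
characteristic not two with involution `σ`, the block matrix `[[0, I],[M, 0]]`
is *congruent to its transpose `[[0, Mᵀ],[I, 0]]` via a coninvolutory matrix:
there is `T` with `T̄ T = 1` (where `T̄ = T.map σ`) such that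
`T* [[0, I],[M, 0]] T = [[0, Mᵀ],[I, 0]]`, where `T* = (T.map σ)ᵀ`. -/
theorem block_star_congruent_transpose {F : Type*} [Field F] (hchar : (2 : F) ≠ 0)
    (σ : F →+* F) (hσ : ∀ a : F, σ (σ a) = a)
    {n : ℕ} (M : Matrix (Fin n) (Fin n) F) :
    ∃ T : Matrix (Fin n ⊕ Fin n) (Fin n ⊕ Fin n) F,
      T.map σ * T = 1 ∧
      (T.map σ)ᵀ * Matrix.fromBlocks 0 1 M 0 * T = Matrix.fromBlocks 0 Mᵀ 1 0 := by
  obtain ⟨P, hPsym, hPdet, hMP⟩ := exists_symm_similar_transpose M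
  set Q : Matrix (Fin n) (Fin n) F := (P⁻¹).map σ with hQ
  have hσcomp : (⇑σ ∘ ⇑σ) = id := funext hσ
  have hQσ : Q.map σ = P⁻¹ := by rw [hQ, Matrix.map_map, hσcomp, Matrix.map_id]
  have hPQ : (P.map σ) * Q = 1 := by
    rw [hQ, ← Matrix.map_mul, Matrix.mul_nonsing_inv P hPdet,
      Matrix.map_one σ σ.map_zero σ.map_one]
  have hQP : P⁻¹ * P = 1 := Matrix.nonsing_inv_mul P hPdet
  have hmap : (Matrix.fromBlocks 0 P Q 0).map σ
      = Matrix.fromBlocks 0 (P.map σ) P⁻¹ 0 := by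
    rw [Matrix.fromBlocks_map, hQσ, Matrix.map_zero _ σ.map_zero]
  have hPinvT : (P⁻¹)ᵀ = P⁻¹ := by rw [Matrix.transpose_nonsing_inv, hPsym]
  have hPmapT : (P.map σ)ᵀ = Pᵀ.map σ := (Matrix.transpose_map).symm
  refine ⟨Matrix.fromBlocks 0 P Q 0, ?_, ?_⟩
  · rw [hmap, Matrix.fromBlocks_multiply]
    simp only [Matrix.mul_zero, Matrix.zero_mul, add_zero, zero_add, hPQ, hQP]
    exact Matrix.fromBlocks_one
  · rw [hmap, Matrix.fromBlocks_transpose, Matrix.transpose_zero, hPinvT, hPmapT, hPsym,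
      Matrix.fromBlocks_multiply, Matrix.fromBlocks_multiply]
    simp only [Matrix.mul_zero, Matrix.zero_mul, add_zero, zero_add, Matrix.mul_one,
      Matrix.one_mul, hPQ]
    have : P⁻¹ * M * P = Mᵀ := by
      rw [Matrix.mul_assoc, hMP, ← Matrix.mul_assoc, hQP, Matrix.one_mul]
    rw [this]
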